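/- Let n, m ≥ 1. Let Λ = diag(λ₁,…,λₙ) be an n×n real diagonal matrix with strictly positive diagonal entries, let H and R be n×n real matrices, B an n×m real matrix, K an m×n real matrix, and let μ > 0 satisfy 2 e^{−μ} λ_max(Λ) ‖H‖₂² ≤ λ_min(Λ), where λ_max(Λ) and λ_min(Λ) are the largest and smallest diagonal entries of Λ. Then there exists a constant C > 0 such that for every continuously differentiable φ : [0,1] → ℝⁿ and every η ∈ ℝⁿ with φ(0) = H φ(1) + BK η, one has: −∫₀¹ φ′(z)ᵀ Λ φ(z) e^{μ(z−1)} dz + ηᵀ R η ≤ C · (∫₀¹ |φ(z)|² e^{μ(z−1)} dz + |η|²). -/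

import Mathlib

open Matrix Set Real

/-- The operator norm of a real matrix, induced by the Euclidean norms. -/
noncomputable def euclOpNorm {m n : ℕ} (A : Matrix (Fin m) (Fin n) ℝ) : ℝ :=
  ‖LinearMap.toContinuousLinearMap (Matrix.toEuclideanLin A)‖

lemma euclOpNorm_nonneg {m n : ℕ} (A : Matrix (Fin m) (Fin n) ℝ) : 0 ≤ euclOpNorm A :=
  norm_nonneg _

lemma norm_mulVec_le {m n : ℕ} (A : Matrix (Fin m) (Fin n) ℝ) (x : EuclideanSpace ℝ (Fin n)) :
    ‖(WithLp.equiv 2 (Fin m → ℝ)).symm (A.mulVec x)‖ ≤ euclOpNorm A * ‖x‖ :=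
  (LinearMap.toContinuousLinearMap (Matrix.toEuclideanLin A)).le_opNorm x

lemma dot_eq_inner {n : ℕ} (x y : EuclideanSpace ℝ (Fin n)) :
    x ⬝ᵥ y = (inner ℝ x y : ℝ) := by
  simp [PiLp.inner_apply, RCLike.inner_apply, dotProduct, mul_comm]

lemma norm_sq_eq_sum' {n : ℕ} (x : EuclideanSpace ℝ (Fin n)) :
    ‖x‖ ^ 2 = ∑ i, x i ^ 2 := by
  rw [EuclideanSpace.norm_eq, Real.sq_sqrt (by positivity)]
  simp [sq_abs]

lemma dot_mulVec_le {n : ℕ} (A : Matrix (Fin n) (Fin n) ℝ) (x : EuclideanSpace ℝ (Fin n)) :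
    x ⬝ᵥ A.mulVec x ≤ euclOpNorm A * ‖x‖ ^ 2 := by
  set v : EuclideanSpace ℝ (Fin n) := (WithLp.equiv 2 (Fin n → ℝ)).symm (A.mulVec x) with hv
  calc x ⬝ᵥ A.mulVec x = (inner ℝ x v : ℝ) := dot_eq_inner x v
    _ ≤ ‖x‖ * ‖v‖ := real_inner_le_norm _ _
    _ ≤ ‖x‖ * (euclOpNorm A * ‖x‖) :=
        mul_le_mul_of_nonneg_left (norm_mulVec_le A x) (norm_nonneg _)
    _ = euclOpNorm A * ‖x‖ ^ 2 := by ring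

set_option maxHeartbeats 2000000 in
/-- (Step 1 of the proof of Lemma 1 of the paper: quasi-dissipativity of the
closed-loop generator `A(φ,η) = (-Λ φ_z, R η)` with respect to the weighted inner product
`⟨(φ,η),(ψ,θ)⟩_μ = ∫₀¹ φᵀψ e^{μ(z-1)} dz + θᵀη`, for `μ` large enough). -/
theorem stmt_12 (n m : ℕ) (hn : 1 ≤ n) (hm : 1 ≤ m)
    (lvec : Fin n → ℝ) (hl : ∀ i, 0 < lvec i)
    (Λ : Matrix (Fin n) (Fin n) ℝ) (hΛ : Λ = Matrix.diagonal lvec)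
    (H R : Matrix (Fin n) (Fin n) ℝ) (B : Matrix (Fin n) (Fin m) ℝ)
    (K : Matrix (Fin m) (Fin n) ℝ)
    (μ : ℝ) (hμ : 0 < μ)
    (hμcond : 2 * Real.exp (-μ) * (⨆ i, lvec i) * euclOpNorm H ^ 2 ≤ ⨅ i, lvec i) :
    ∃ C > (0:ℝ), ∀ (φ φ' : ℝ → EuclideanSpace ℝ (Fin n)) (η : EuclideanSpace ℝ (Fin n)),
      (∀ z ∈ Set.Icc (0:ℝ) 1, HasDerivWithinAt φ (φ' z) (Set.Icc (0:ℝ) 1) z) →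
      ContinuousOn φ' (Set.Icc (0:ℝ) 1) →
      φ 0 = H.mulVec (φ 1) + (B * K).mulVec η →
      -(∫ z in (0:ℝ)..1, (φ' z ⬝ᵥ Λ.mulVec (φ z)) * Real.exp (μ * (z - 1))) +
          η ⬝ᵥ R.mulVec η ≤
        C * ((∫ z in (0:ℝ)..1, ‖φ z‖ ^ 2 * Real.exp (μ * (z - 1))) + ‖η‖ ^ 2) := by
  haveI : Nonempty (Fin n) := ⟨⟨0, hn⟩⟩
  have hbddA : BddAbove (Set.range lvec) := (Set.finite_range lvec).bddAbove
  have hbddB : BddBelow (Set.range lvec) := (Set.finite_range lvec).bddBelow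
  set L := ⨆ i, lvec i with hLdef
  set l := ⨅ i, lvec i with hldef
  have hle_L : ∀ i, lvec i ≤ L := fun i => le_ciSup hbddA i
  have hl_le : ∀ i, l ≤ lvec i := fun i => ciInf_le hbddB i
  have hLpos : 0 < L := (hl ⟨0, hn⟩).trans_le (hle_L _)
  refine ⟨μ * L / 2 + Real.exp (-μ) * L * euclOpNorm (B * K) ^ 2 + euclOpNorm R + 1, ?_, ?_⟩
  · have h1 : 0 ≤ μ * L / 2 := by positivity
    have h2 := euclOpNorm_nonneg R
    have h3 : 0 ≤ Real.exp (-μ) * L * euclOpNorm (B * K) ^ 2 := by positivity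
    linarith
  intro φ φ' η hderiv hcont hbc
  set e : ℝ → ℝ := fun z => Real.exp (μ * (z - 1)) with hedef
  set q : ℝ → ℝ := fun z => φ z ⬝ᵥ Λ.mulVec (φ z) with hqdef
  set d : ℝ → ℝ := fun z => φ' z ⬝ᵥ Λ.mulVec (φ z) with hddef
  have hqsum : ∀ z, q z = ∑ i, lvec i * (φ z i * φ z i) := by
    intro z
    simp only [hqdef, hΛ, dotProduct, mulVec_diagonal]
    exact Finset.sum_congr rfl fun i _ => by ring
  have hdsum : ∀ z, d z = ∑ i, lvec i * (φ' z i * φ z i) := by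
    intro z
    simp only [hddef, hΛ, dotProduct, mulVec_diagonal]
    exact Finset.sum_congr rfl fun i _ => by ring
  -- component derivatives and continuity
  have hdi : ∀ (i : Fin n), ∀ z ∈ Icc (0:ℝ) 1,
      HasDerivWithinAt (fun z => φ z i) (φ' z i) (Icc (0:ℝ) 1) z := by
    intro i z hz
    exact (EuclideanSpace.proj i).hasFDerivAt.comp_hasDerivWithinAt z (hderiv z hz)
  have hφc : ContinuousOn φ (Icc (0:ℝ) 1) := fun z hz => (hderiv z hz).continuousWithinAt
  have hφci : ∀ (i : Fin n), ContinuousOn (fun z => φ z i) (Icc (0:ℝ) 1) := fun i =>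
    (EuclideanSpace.proj (𝕜 := ℝ) i).continuous.comp_continuousOn hφc
  have hφ'ci : ∀ (i : Fin n), ContinuousOn (fun z => φ' z i) (Icc (0:ℝ) 1) := fun i =>
    (EuclideanSpace.proj (𝕜 := ℝ) i).continuous.comp_continuousOn hcont
  have hec : Continuous e := Real.continuous_exp.comp (by fun_prop)
  have hqc : ContinuousOn q (Icc (0:ℝ) 1) := by
    have : q = fun z => ∑ i, lvec i * (φ z i * φ z i) := funext hqsum
    rw [this]
    exact continuousOn_finset_sum _ fun i _ => continuousOn_const.mul ((hφci i).mul (hφci i))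
  have hdc : ContinuousOn d (Icc (0:ℝ) 1) := by
    have : d = fun z => ∑ i, lvec i * (φ' z i * φ z i) := funext hdsum
    rw [this]
    exact continuousOn_finset_sum _ fun i _ => continuousOn_const.mul ((hφ'ci i).mul (hφci i))
  have uIcc01 : uIcc (0:ℝ) 1 = Icc (0:ℝ) 1 := uIcc_of_le (by norm_num)
  have hint_de : IntervalIntegrable (fun z => d z * e z) MeasureTheory.volume 0 1 := by
    apply ContinuousOn.intervalIntegrable
    rw [uIcc01]; exact hdc.mul hec.continuousOn
  have hint_qe : IntervalIntegrable (fun z => q z * e z) MeasureTheory.volume 0 1 := by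
    apply ContinuousOn.intervalIntegrable
    rw [uIcc01]; exact hqc.mul hec.continuousOn
  have hint_ne : IntervalIntegrable (fun z => ‖φ z‖ ^ 2 * e z) MeasureTheory.volume 0 1 := by
    apply ContinuousOn.intervalIntegrable
    rw [uIcc01]; exact ((hφc.norm.pow 2)).mul hec.continuousOn
  -- derivative of e
  have heg : ∀ z : ℝ, HasDerivAt e (μ * e z) z := by
    intro z
    have h1 : HasDerivAt (fun z : ℝ => μ * (z - 1)) μ z := by
      simpa using ((hasDerivAt_id z).sub_const 1).const_mul μ
    simpa [hedef, mul_comm] using h1.exp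
  -- derivative of q
  have hqd : ∀ z ∈ Icc (0:ℝ) 1, HasDerivWithinAt q (2 * d z) (Icc (0:ℝ) 1) z := by
    intro z hz
    have h1 : HasDerivWithinAt (fun z => ∑ i, lvec i * (φ z i * φ z i))
        (∑ i, lvec i * (φ' z i * φ z i + φ z i * φ' z i)) (Icc (0:ℝ) 1) z :=
      HasDerivWithinAt.fun_sum fun i _ => ((hdi i z hz).mul (hdi i z hz)).const_mul (lvec i)
    have h2 : q = fun z => ∑ i, lvec i * (φ z i * φ z i) := funext hqsum
    rw [h2]
    convert h1 using 1
    rw [hdsum z, Finset.mul_sum]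
    exact Finset.sum_congr rfl fun i _ => by ring
  have hgd : ∀ z ∈ Icc (0:ℝ) 1, HasDerivWithinAt (fun z => q z * e z)
      (2 * d z * e z + q z * (μ * e z)) (Icc (0:ℝ) 1) z := fun z hz =>
    (hqd z hz).mul (heg z).hasDerivWithinAt
  -- FTC
  have hFTC : ∫ z in (0:ℝ)..1, (2 * d z * e z + q z * (μ * e z)) = q 1 * e 1 - q 0 * e 0 := by
    apply intervalIntegral.integral_eq_sub_of_hasDeriv_right_of_le (by norm_num)
      (hqc.mul hec.continuousOn)
    · intro z hz
      exact ((hgd z (Ioo_subset_Icc_self hz)).hasDerivAt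
        (Icc_mem_nhds hz.1 hz.2)).hasDerivWithinAt
    · apply ContinuousOn.intervalIntegrable
      rw [uIcc01]
      exact ((continuousOn_const.mul hdc).mul hec.continuousOn).add
        (hqc.mul (continuousOn_const.mul hec.continuousOn))
  -- split the integral
  have hsplit : ∫ z in (0:ℝ)..1, (2 * d z * e z + q z * (μ * e z)) =
      2 * (∫ z in (0:ℝ)..1, d z * e z) + μ * ∫ z in (0:ℝ)..1, q z * e z := by
    have h1 : ∫ z in (0:ℝ)..1, (2 * d z * e z + q z * (μ * e z)) =
        ∫ z in (0:ℝ)..1, (2 * (d z * e z) + μ * (q z * e z)) := by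
      apply intervalIntegral.integral_congr
      intro z _; ring
    rw [h1, intervalIntegral.integral_add (hint_de.const_mul 2) (hint_qe.const_mul μ),
      intervalIntegral.integral_const_mul, intervalIntegral.integral_const_mul]
  set A := ∫ z in (0:ℝ)..1, d z * e z with hAdef
  set Iq := ∫ z in (0:ℝ)..1, q z * e z with hIqdef
  set I0 := ∫ z in (0:ℝ)..1, ‖φ z‖ ^ 2 * e z with hI0def
  have key : 2 * A + μ * Iq = q 1 * e 1 - q 0 * e 0 := by
    rw [← hsplit]; exact hFTC
  -- pointwise bounds
  have hqle : ∀ z, q z ≤ L * ‖φ z‖ ^ 2 := by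
    intro z
    rw [hqsum z, norm_sq_eq_sum' (φ z), Finset.mul_sum]
    refine Finset.sum_le_sum fun i _ => ?_
    have := hle_L i
    nlinarith [sq_nonneg (φ z i)]
  have hqge : ∀ z, l * ‖φ z‖ ^ 2 ≤ q z := by
    intro z
    rw [hqsum z, norm_sq_eq_sum' (φ z), Finset.mul_sum]
    refine Finset.sum_le_sum fun i _ => ?_
    have := hl_le i
    nlinarith [sq_nonneg (φ z i)]
  have hIq : Iq ≤ L * I0 := by
    have h2 : L * I0 = ∫ z in (0:ℝ)..1, L * (‖φ z‖ ^ 2 * e z) :=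
      (intervalIntegral.integral_const_mul L _).symm
    rw [h2]
    apply intervalIntegral.integral_mono_on (by norm_num) hint_qe (hint_ne.const_mul L)
    intro z _
    rw [← mul_assoc]
    exact mul_le_mul_of_nonneg_right (hqle z) (Real.exp_pos _).le
  have hI0 : 0 ≤ I0 := intervalIntegral.integral_nonneg (by norm_num)
    (fun z _ => by positivity)
  -- boundary estimate
  have hφ0 : ‖φ 0‖ ≤ euclOpNorm H * ‖φ 1‖ + euclOpNorm (B * K) * ‖η‖ := by
    rw [show φ 0 = (WithLp.equiv 2 (Fin n → ℝ)).symm (H.mulVec (φ 1)) +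
        (WithLp.equiv 2 (Fin n → ℝ)).symm ((B * K).mulVec η) from
      (WithLp.equiv 2 _).injective (by simp [hbc])]
    exact (norm_add_le _ _).trans (add_le_add (norm_mulVec_le H (φ 1))
      (norm_mulVec_le (B * K) η))
  have he0 : e 0 = Real.exp (-μ) := by simp [hedef]
  have he1 : e 1 = 1 := by simp [hedef]
  have hb : q 0 * e 0 - q 1 * e 1 ≤
      2 * Real.exp (-μ) * L * euclOpNorm (B * K) ^ 2 * ‖η‖ ^ 2 := by
    have h1 : q 0 ≤ L * ‖φ 0‖ ^ 2 := hqle 0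
    have h2 : l * ‖φ 1‖ ^ 2 ≤ q 1 := hqge 1
    have h4 : ‖φ 0‖ ^ 2 ≤ 2 * euclOpNorm H ^ 2 * ‖φ 1‖ ^ 2
        + 2 * euclOpNorm (B * K) ^ 2 * ‖η‖ ^ 2 := by
      nlinarith [hφ0, norm_nonneg (φ 0), norm_nonneg (φ 1), norm_nonneg η,
        euclOpNorm_nonneg H, euclOpNorm_nonneg (B * K),
        sq_nonneg (euclOpNorm H * ‖φ 1‖ - euclOpNorm (B * K) * ‖η‖)]
    rw [he0, he1]
    have h5 : 2 * Real.exp (-μ) * L * euclOpNorm H ^ 2 * ‖φ 1‖ ^ 2 ≤ l * ‖φ 1‖ ^ 2 :=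
      mul_le_mul_of_nonneg_right hμcond (sq_nonneg _)
    have h7 : q 0 * Real.exp (-μ) ≤ L * ‖φ 0‖ ^ 2 * Real.exp (-μ) :=
      mul_le_mul_of_nonneg_right h1 (Real.exp_pos _).le
    have h8 : Real.exp (-μ) * L * ‖φ 0‖ ^ 2 ≤ Real.exp (-μ) * L *
        (2 * euclOpNorm H ^ 2 * ‖φ 1‖ ^ 2 + 2 * euclOpNorm (B * K) ^ 2 * ‖η‖ ^ 2) :=
      mul_le_mul_of_nonneg_left h4 (by positivity)
    linarith
  have hR : η ⬝ᵥ R.mulVec η ≤ euclOpNorm R * ‖η‖ ^ 2 := dot_mulVec_le R η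
  -- conclude
  have hgoal : -A + η ⬝ᵥ R.mulVec η ≤
      (μ * L / 2 + Real.exp (-μ) * L * euclOpNorm (B * K) ^ 2 + euclOpNorm R + 1)
        * (I0 + ‖η‖ ^ 2) := by
    have hmul : μ * Iq ≤ μ * (L * I0) := mul_le_mul_of_nonneg_left hIq hμ.le
    have h6 : -A ≤ μ * (L * I0) / 2 + Real.exp (-μ) * L * euclOpNorm (B * K) ^ 2 * ‖η‖ ^ 2 := by
      linarith
    have hexp : (μ * L / 2 + Real.exp (-μ) * L * euclOpNorm (B * K) ^ 2 + euclOpNorm R + 1)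
        * (I0 + ‖η‖ ^ 2) =
        μ * L / 2 * I0 + Real.exp (-μ) * L * euclOpNorm (B * K) ^ 2 * I0 + euclOpNorm R * I0
          + I0 + μ * L / 2 * ‖η‖ ^ 2 + Real.exp (-μ) * L * euclOpNorm (B * K) ^ 2 * ‖η‖ ^ 2
          + euclOpNorm R * ‖η‖ ^ 2 + ‖η‖ ^ 2 := by ring
    have p1 : 0 ≤ Real.exp (-μ) * L * euclOpNorm (B * K) ^ 2 * I0 := by positivity
    have p2 : 0 ≤ euclOpNorm R * I0 := mul_nonneg (euclOpNorm_nonneg R) hI0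
    have p3 : 0 ≤ μ * L / 2 * ‖η‖ ^ 2 := by positivity
    have p4 : 0 ≤ ‖η‖ ^ 2 := sq_nonneg _
    linarith
  exact hgoal
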